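/- Let X be a finite type, a : Finset X → ℝ a non-negative monotone submodular set function, n ≥ 1, α ∈ (0,1], and let x₀, …, x_{n−1} be an α-approximate greedy sequence for a with partial sets B_i and output B_n. Then for every B* ⊆ X with |B*| = n, a(B_n) ≥ (1 − exp(−α))·a(B*). -/

import Mathlib

open Finset

/-- Marginal gain `Δ_a(x ∣ B) = a(B ∪ {x}) − a(B)`. -/
def margGain {X : Type*} [DecidableEq X] (a : Finset X → ℝ) (x : X) (B : Finset X) : ℝ :=
  a (insert x B) - a B

/-- The partial set `B_i = {x₀, …, x_{i−1}}` of a sequence `xs`. -/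
def partialSet {X : Type*} [DecidableEq X] {n : ℕ} (xs : Fin n → X) (i : ℕ) : Finset X :=
  (Finset.univ.filter (fun j : Fin n => (j : ℕ) < i)).image xs

lemma aux_mono_union {X : Type*} [DecidableEq X] (a : Finset X → ℝ)
    (ha_mono : ∀ (B : Finset X) (x : X), 0 ≤ margGain a x B)
    (B S : Finset X) : a B ≤ a (B ∪ S) := by
  classical
  induction S using Finset.induction_on with
  | empty => simp
  | @insert x S hx ih =>
    have h := ha_mono (B ∪ S) x
    rw [margGain] at h
    have : B ∪ insert x S = insert x (B ∪ S) := by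
      ext y; simp [or_comm, or_left_comm]
    rw [this]
    linarith

lemma aux_mono {X : Type*} [DecidableEq X] (a : Finset X → ℝ)
    (ha_mono : ∀ (B : Finset X) (x : X), 0 ≤ margGain a x B)
    {B C : Finset X} (h : B ⊆ C) : a B ≤ a C := by
  have := aux_mono_union a ha_mono B C
  rwa [Finset.union_eq_right.2 h] at this

lemma aux_telescope {X : Type*} [DecidableEq X] (a : Finset X → ℝ)
    (ha_mono : ∀ (B : Finset X) (x : X), 0 ≤ margGain a x B)
    (ha_submod : ∀ B' B : Finset X, B' ⊆ B → ∀ x : X, x ∉ B →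
      margGain a x B ≤ margGain a x B')
    (S B : Finset X) : a (B ∪ S) - a B ≤ ∑ x ∈ S, margGain a x B := by
  classical
  induction S using Finset.induction_on with
  | empty => simp
  | @insert x S hx ih =>
    have hBu : B ∪ insert x S = insert x (B ∪ S) := by
      ext y; simp [or_comm, or_left_comm]
    rw [hBu, Finset.sum_insert hx]
    have hkey : margGain a x (B ∪ S) ≤ margGain a x B := by
      by_cases hmem : x ∈ B ∪ S
      · have : insert x (B ∪ S) = B ∪ S := Finset.insert_eq_self.2 hmem
        rw [margGain, this]
        simpa using ha_mono B x
      · exact ha_submod B (B ∪ S) Finset.subset_union_left x hmem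
    have : a (insert x (B ∪ S)) - a (B ∪ S) = margGain a x (B ∪ S) := rfl
    linarith [ih]

lemma partialSet_zero {X : Type*} [DecidableEq X] {n : ℕ} (xs : Fin n → X) :
    partialSet xs 0 = ∅ := by
  simp [partialSet]

lemma partialSet_succ {X : Type*} [DecidableEq X] {n : ℕ} (xs : Fin n → X)
    (i : ℕ) (hi : i < n) :
    partialSet xs (i + 1) = insert (xs ⟨i, hi⟩) (partialSet xs i) := by
  ext y
  simp only [partialSet, Finset.mem_image, Finset.mem_filter, Finset.mem_univ, true_and,
    Finset.mem_insert]
  constructor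
  · rintro ⟨j, hj, rfl⟩
    rcases Nat.lt_succ_iff_lt_or_eq.1 hj with h | h
    · exact Or.inr ⟨j, h, rfl⟩
    · left
      congr 1
      exact Fin.ext h
  · rintro (h | ⟨j, hj, rfl⟩)
    · exact ⟨⟨i, hi⟩, Nat.lt_succ_self i, h.symm⟩
    · exact ⟨j, Nat.lt_succ_of_lt hj, rfl⟩

/-- approximation guarantee of the α-approximate greedy algorithm
for a non-negative monotone submodular set function:
`a(B_n) ≥ (1 − exp(−α))·a(B*)` for every `n`-subset `B*`. -/
theorem approx_greedy_submodular_bound {X : Type*} [Fintype X] [DecidableEq X]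
    (a : Finset X → ℝ)
    (ha_nonneg : ∀ B : Finset X, 0 ≤ a B)
    (ha_mono : ∀ (B : Finset X) (x : X), 0 ≤ margGain a x B)
    (ha_submod : ∀ B' B : Finset X, B' ⊆ B → ∀ x : X, x ∉ B →
      margGain a x B ≤ margGain a x B')
    (n : ℕ) (hn : 1 ≤ n)
    (α : ℝ) (hα0 : 0 < α) (hα1 : α ≤ 1)
    (xs : Fin n → X)
    (hgreedy : ∀ i : Fin n, ∀ x : X, x ∉ partialSet xs i →
      α * margGain a x (partialSet xs i) ≤ margGain a (xs i) (partialSet xs i))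
    (Bstar : Finset X) (hBstar : Bstar.card = n) :
    (1 - Real.exp (-α)) * a Bstar ≤ a (partialSet xs n) := by
  have hn' : (0 : ℝ) < n := by exact_mod_cast hn
  set r : ℝ := 1 - α / n with hr
  have hαn1 : α / n ≤ 1 := by
    rw [div_le_one hn']
    calc α ≤ 1 := hα1
    _ ≤ n := by exact_mod_cast hn
  have hr0 : 0 ≤ r := by simp [hr]; linarith
  -- one-step contraction
  have hstep : ∀ i : ℕ, (hi : i < n) →
      a Bstar - a (partialSet xs (i + 1)) ≤ r * (a Bstar - a (partialSet xs i)) := by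
    intro i hi
    set Bi := partialSet xs i with hBi
    set δ := margGain a (xs ⟨i, hi⟩) Bi with hδ
    have hδ0 : 0 ≤ δ := ha_mono Bi _
    -- a Bstar - a Bi ≤ (n/α) * δ
    have hbound : a Bstar - a Bi ≤ (n / α) * δ := by
      have h1 : a Bstar ≤ a (Bi ∪ (Bstar \ Bi)) := by
        apply aux_mono a ha_mono
        intro y hy
        simp only [Finset.mem_union, Finset.mem_sdiff]
        by_cases h : y ∈ Bi
        · exact Or.inl h
        · exact Or.inr ⟨hy, h⟩
      have h2 := aux_telescope a ha_mono ha_submod (Bstar \ Bi) Bi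
      have h3 : ∑ x ∈ Bstar \ Bi, margGain a x Bi ≤ ∑ _x ∈ Bstar \ Bi, δ / α := by
        apply Finset.sum_le_sum
        intro x hx
        have hxB : x ∉ Bi := (Finset.mem_sdiff.1 hx).2
        have := hgreedy ⟨i, hi⟩ x hxB
        rw [le_div_iff₀ hα0]
        linarith [this]
      have h4 : ∑ _x ∈ Bstar \ Bi, δ / α = ((Bstar \ Bi).card : ℝ) * (δ / α) := by
        simp [Finset.sum_const, nsmul_eq_mul]
      have h5 : ((Bstar \ Bi).card : ℝ) ≤ n := by
        have := Finset.card_le_card (Finset.sdiff_subset (s := Bstar) (t := Bi))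
        rw [hBstar] at this
        exact_mod_cast this
      have h6 : ((Bstar \ Bi).card : ℝ) * (δ / α) ≤ n * (δ / α) := by
        apply mul_le_mul_of_nonneg_right h5
        positivity
      have : a Bstar - a Bi ≤ ∑ x ∈ Bstar \ Bi, margGain a x Bi := by linarith
      calc a Bstar - a Bi ≤ ((Bstar \ Bi).card : ℝ) * (δ / α) := by
            rw [← h4]; linarith
        _ ≤ n * (δ / α) := h6
        _ = (n / α) * δ := by ring
    have hsucc : a (partialSet xs (i + 1)) = a Bi + δ := by
      rw [partialSet_succ xs i hi, hδ, margGain]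
      ring
    rw [hsucc]
    have hαδ : (α / n) * (a Bstar - a Bi) ≤ δ := by
      have h := mul_le_mul_of_nonneg_left hbound (le_of_lt (div_pos hα0 hn'))
      calc (α / n) * (a Bstar - a Bi) ≤ (α / n) * ((n / α) * δ) := h
        _ = δ := by field_simp
    simp only [hr]
    nlinarith [hαδ]
  -- iterate
  have hiter : ∀ i : ℕ, i ≤ n →
      a Bstar - a (partialSet xs i) ≤ r ^ i * (a Bstar - a (∅ : Finset X)) := by
    intro i
    induction i with
    | zero => intro _; simp [partialSet_zero]
    | succ i ih =>
      intro hi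
      have hi' : i < n := hi
      have h1 := hstep i hi'
      have h2 := ih (Nat.le_of_lt hi')
      calc a Bstar - a (partialSet xs (i + 1)) ≤ r * (a Bstar - a (partialSet xs i)) := h1
        _ ≤ r * (r ^ i * (a Bstar - a ∅)) := mul_le_mul_of_nonneg_left h2 hr0
        _ = r ^ (i + 1) * (a Bstar - a ∅) := by ring
  have hg0nn : 0 ≤ a Bstar - a (∅ : Finset X) :=
    sub_nonneg.2 (aux_mono a ha_mono (Finset.empty_subset Bstar))
  have hg0le : a Bstar - a (∅ : Finset X) ≤ a Bstar := by linarith [ha_nonneg (∅ : Finset X)]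
  have hrexp : r ≤ Real.exp (-(α / n)) := by
    have := Real.add_one_le_exp (-(α / n))
    linarith
  have hrn : r ^ n ≤ Real.exp (-α) := by
    calc r ^ n ≤ (Real.exp (-(α / n))) ^ n := pow_le_pow_left₀ hr0 hrexp n
      _ = Real.exp (n * (-(α / n))) := by rw [← Real.exp_nat_mul]
      _ = Real.exp (-α) := by
          congr 1
          field_simp
  have hfinal := hiter n le_rfl
  have hexp0 : 0 ≤ Real.exp (-α) := le_of_lt (Real.exp_pos _)
  have : a Bstar - a (partialSet xs n) ≤ Real.exp (-α) * a Bstar := by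
    calc a Bstar - a (partialSet xs n) ≤ r ^ n * (a Bstar - a ∅) := hfinal
      _ ≤ Real.exp (-α) * (a Bstar - a ∅) := mul_le_mul_of_nonneg_right hrn hg0nn
      _ ≤ Real.exp (-α) * a Bstar := mul_le_mul_of_nonneg_left hg0le hexp0
  linarith
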